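/- Let s,ℓ,c be positive integers with c+ℓ=s and n=3s-ℓ=2ℓ+3c. Let F ⊆ 2^[n] be a shifted family with ν(F) < s and d(F) ≥ c+2. Then y_F(3) ≥ (2ℓ+c)(2c−1). -/

import Mathlib

open Finset

/-- The ground set `[n] = {1, 2, …, n}`. -/
def ground (n : ℕ) : Finset ℕ := Finset.Icc 1 n

-- The matching number `ν(F)` of a family: the size of the largest pairwise
-- disjoint subfamily of `F`.
open Classical in
noncomputable def matchingNumber (F : Finset (Finset ℕ)) : ℕ :=
  (F.powerset.filter fun M : Finset (Finset ℕ) =>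
      (M : Set (Finset ℕ)).Pairwise fun A B => Disjoint A B).sup Finset.card

-- `e(n, s)`: the maximum size of a family `F ⊆ 2^[n]` with `ν(F) < s`.
open Classical in
noncomputable def extremalNumber (n s : ℕ) : ℕ :=
  (((ground n).powerset.powerset).filter fun F => matchingNumber F < s).sup Finset.card

/-- The family `P(s, ℓ) = {P ⊆ [n] : |P| + |P ∩ [ℓ-1]| ≥ 3}` (it depends only on `n, ℓ`). -/
def famP (n l : ℕ) : Finset (Finset ℕ) :=
  (ground n).powerset.filter fun A => 3 ≤ A.card + (A ∩ Finset.Icc 1 (l - 1)).card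

/-- The family `P'(s, ℓ)`: all subsets of `[n]` of size at least `3` together with
all `2`-element subsets of `[2ℓ-1]`. -/
def famP' (n l : ℕ) : Finset (Finset ℕ) :=
  ((ground n).powerset.filter fun A => 3 ≤ A.card) ∪
    (Finset.Icc 1 (2 * l - 1)).powersetCard 2

/-- The family `Q(s, ℓ)`: all subsets of `[n]` of size at least `3` together with all
`2`-element subsets of `[s+ℓ-1]`, with all `3`-element subsets of `[s+ℓ, n]` removed. -/
def famQ (n s l : ℕ) : Finset (Finset ℕ) :=
  (((ground n).powerset.filter fun A => 3 ≤ A.card) ∪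
      (Finset.Icc 1 (s + l - 1)).powersetCard 2) \
    (Finset.Icc (s + l) n).powersetCard 3

/-- The family `W(s, ℓ) = {P ⊆ [n] : |P ∩ [2s-1]| ≥ 2}`. -/
def famW (n s : ℕ) : Finset (Finset ℕ) :=
  (ground n).powerset.filter fun A => 2 ≤ (A ∩ Finset.Icc 1 (2 * s - 1)).card

/-- The `(i ← j)`-shift of a set. -/
def shiftSet (i j : ℕ) (A : Finset ℕ) : Finset ℕ :=
  if j ∈ A ∧ i ∉ A then insert i (A.erase j) else A

/-- The `(i ← j)`-shift of a family. -/
def shiftFam (i j : ℕ) (F : Finset (Finset ℕ)) : Finset (Finset ℕ) :=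
  F.image (shiftSet i j) ∪ F.filter fun A => shiftSet i j A ∈ F

/-- A family `F ⊆ 2^[n]` is shifted if it is invariant under all `(i ← j)`-shifts
with `1 ≤ i < j ≤ n`. -/
def IsShifted (n : ℕ) (F : Finset (Finset ℕ)) : Prop :=
  ∀ i j : ℕ, 1 ≤ i → i < j → j ≤ n → shiftFam i j F = F

/-- `A` can be shifted to `B`: some sequence of `(a ← b)`-shifts with `a < b`
transforms `A` into `B`. -/
def ShiftsTo (n : ℕ) (A B : Finset ℕ) : Prop :=
  Relation.ReflTransGen
    (fun X Y => ∃ a b : ℕ, 1 ≤ a ∧ a < b ∧ b ≤ n ∧ Y = shiftSet a b X) A B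

/-- A family `F ⊆ 2^[n]` is an up-set if it is closed under supersets inside `[n]`. -/
def IsUpSet (n : ℕ) (F : Finset (Finset ℕ)) : Prop :=
  ∀ A ∈ F, ∀ B : Finset ℕ, A ⊆ B → B ⊆ ground n → B ∈ F

/-- The `k`-th layer of a family: its `k`-element members (as subsets of `[n]`). -/
def layer (n : ℕ) (F : Finset (Finset ℕ)) (k : ℕ) : Finset (Finset ℕ) :=
  F ∩ (ground n).powersetCard k

/-- `y_F(k)`: the number of `k`-element subsets of `[n]` that do not belong to `F`. -/
def yF (n : ℕ) (F : Finset (Finset ℕ)) (k : ℕ) : ℕ :=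
  Nat.choose n k - (layer n F k).card

/-- The defining condition for `d(F)` (with parameter `ℓ`). -/
def DCond (l : ℕ) (F : Finset (Finset ℕ)) (d : ℕ) : Prop :=
  (Even d ∧ ∃ i ∈ Finset.Icc 1 (l + d / 2), ({i, 2 * l + d + 1 - i} : Finset ℕ) ∉ F) ∨
  (Odd d ∧ (({1, 2 * l + d} : Finset ℕ) ∉ F ∨
    ∃ i ∈ Finset.Icc 3 (l + (d + 1) / 2), ({i, 2 * l + d + 2 - i} : Finset ℕ) ∉ F))

/-- `d(F)`: the smallest `d ≥ 0` satisfying the condition `DCond ℓ F d`. -/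
noncomputable def dF (l : ℕ) (F : Finset (Finset ℕ)) : ℕ := sInf {d : ℕ | DCond l F d}

private lemma tri_eq {x u v x' u' v' : ℕ} (h1 : x < u) (h2 : u < v)
    (h1' : x' < u') (h2' : u' < v')
    (he : ({x, u, v} : Finset ℕ) = {x', u', v'}) : x = x' ∧ u = u' ∧ v = v' := by
  have m1 : x' ∈ ({x, u, v} : Finset ℕ) := by rw [he]; simp
  have m2 : u' ∈ ({x, u, v} : Finset ℕ) := by rw [he]; simp
  have m3 : v' ∈ ({x, u, v} : Finset ℕ) := by rw [he]; simp
  have m4 : x ∈ ({x', u', v'} : Finset ℕ) := by rw [← he]; simp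
  have m5 : u ∈ ({x', u', v'} : Finset ℕ) := by rw [← he]; simp
  have m6 : v ∈ ({x', u', v'} : Finset ℕ) := by rw [← he]; simp
  simp only [mem_insert, mem_singleton] at m1 m2 m3 m4 m5 m6
  omega

private lemma shift_mem {n : ℕ} {F : Finset (Finset ℕ)} (hsh : IsShifted n F)
    {A : Finset ℕ} (hA : A ∈ F) {a b : ℕ} (ha : 1 ≤ a) (hab : a < b) (hb : b ≤ n) :
    shiftSet a b A ∈ F := by
  rw [← hsh a b ha hab hb]
  exact mem_union_left _ (mem_image_of_mem _ hA)

private lemma shiftSet_eval {a b : ℕ} {A : Finset ℕ} (hb : b ∈ A) (ha : a ∉ A) :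
    shiftSet a b A = insert a (A.erase b) := if_pos ⟨hb, ha⟩

-- shift a pair {i,j} down in second coordinate: b replaces j
private lemma pair_shift {i j b : ℕ} (hji : j ≠ i) (hbi : b ≠ i) (hbj : b ≠ j) :
    shiftSet b j ({i, j} : Finset ℕ) = {i, b} := by
  rw [shiftSet_eval (by simp) (by simp [hbi, hbj])]
  ext t
  simp only [mem_insert, mem_singleton, mem_erase]
  constructor
  · rintro (rfl | ⟨ht, (rfl | rfl)⟩)
    · exact Or.inr rfl
    · exact Or.inl rfl
    · exact absurd rfl ht
  · rintro (rfl | rfl)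
    · exact Or.inr ⟨fun h => hji h.symm, Or.inl rfl⟩
    · exact Or.inl rfl

private lemma tri_shift {x x0 u v : ℕ} (hx0 : x ≠ x0) (hxu : x ≠ u) (hxv : x ≠ v)
    (h0u : x0 ≠ u) (h0v : x0 ≠ v) :
    shiftSet x x0 ({x0, u, v} : Finset ℕ) = {x, u, v} := by
  rw [shiftSet_eval (by simp) (by simp [hx0, hxu, hxv])]
  ext t
  simp only [mem_insert, mem_singleton, mem_erase]
  constructor
  · rintro (rfl | ⟨ht, (rfl | rfl | rfl)⟩)
    · exact Or.inl rfl
    · exact absurd rfl ht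
    · exact Or.inr (Or.inl rfl)
    · exact Or.inr (Or.inr rfl)
  · rintro (rfl | rfl | rfl)
    · exact Or.inl rfl
    · exact Or.inr ⟨fun h => h0u h.symm, Or.inr (Or.inl rfl)⟩
    · exact Or.inr ⟨fun h => h0v h.symm, Or.inr (Or.inr rfl)⟩

-- pair domination closure
private lemma pair_down {n : ℕ} {F : Finset (Finset ℕ)} (hsh : IsShifted n F)
    {i j a b : ℕ} (hij : i < j) (hjn : j ≤ n) (hmem : ({i, j} : Finset ℕ) ∈ F)
    (ha : 1 ≤ a) (hab : a < b) (hai : a ≤ i) (hbj : b ≤ j) :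
    ({a, b} : Finset ℕ) ∈ F := by
  rcases eq_or_lt_of_le hbj with rfl | hbj'
  · -- b = j
    rcases eq_or_lt_of_le hai with rfl | hai'
    · exact hmem
    · have hs := shift_mem hsh hmem ha hai' (le_of_lt (lt_of_lt_of_le hij hjn))
      have hc : shiftSet a i ({i, b} : Finset ℕ) = {a, b} := by
        have : ({i, b} : Finset ℕ) = {b, i} := pair_comm i b
        rw [this, pair_shift (by omega) (by omega) (by omega), pair_comm]
      rwa [hc] at hs
  · by_cases hbi : b = i
    · subst hbi
      have hs := shift_mem hsh hmem ha (by omega : a < j) hjn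
      have hc : shiftSet a j ({b, j} : Finset ℕ) = {b, a} := pair_shift (by omega) (by omega) (by omega)
      rw [hc] at hs
      rwa [pair_comm] at hs
    · have h1 : ({i, b} : Finset ℕ) ∈ F := by
        have hs := shift_mem hsh hmem (by omega : 1 ≤ b) hbj' hjn
        rwa [pair_shift (by omega) hbi (by omega)] at hs
      rcases eq_or_lt_of_le hai with rfl | hai'
      · exact h1
      · have hs := shift_mem hsh h1 ha hai' (by omega)
        have hc : shiftSet a i ({i, b} : Finset ℕ) = {a, b} := by
          rw [pair_comm i b, pair_shift (by omega) (by omega) (by omega), pair_comm]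
        rwa [hc] at hs

-- triple min-coordinate closure
private lemma tri_down {n : ℕ} {F : Finset (Finset ℕ)} (hsh : IsShifted n F)
    {x0 u v x : ℕ} (h0u : x0 < u) (huv : u < v) (hvn : v ≤ n)
    (hmem : ({x0, u, v} : Finset ℕ) ∈ F) (hx : 1 ≤ x) (hxx0 : x ≤ x0) :
    ({x, u, v} : Finset ℕ) ∈ F := by
  rcases eq_or_lt_of_le hxx0 with rfl | hlt
  · exact hmem
  · have hs := shift_mem hsh hmem hx hlt (by omega)
    rwa [tri_shift (by omega) (by omega) (by omega) (by omega) (by omega)] at hs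

private lemma nu_ge {F : Finset (Finset ℕ)} {M : Finset (Finset ℕ)}
    (hsub : M ⊆ F)
    (hpw : (M : Set (Finset ℕ)).Pairwise fun A B => Disjoint A B) :
    M.card ≤ matchingNumber F := by
  classical
  unfold matchingNumber
  have hM : M ∈ F.powerset.filter (fun M : Finset (Finset ℕ) =>
      (M : Set (Finset ℕ)).Pairwise fun A B => Disjoint A B) := by
    rw [mem_filter, mem_powerset]
    exact ⟨hsub, hpw⟩
  exact Finset.le_sup (f := Finset.card) hM

-- Hall-type assignment lemma
private lemma hall_assign (W : ℕ → ℕ) :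
    ∀ (k : ℕ) (Q : Finset ℕ) (M : ℕ), Q.card = k →
    (∀ t, t ≤ k → ((Q.filter fun q => W q ≤ M + t).card ≤ t)) →
    ∃ μ : ℕ → ℕ, Set.InjOn μ Q ∧ ∀ q ∈ Q, M + 1 ≤ μ q ∧ μ q ≤ M + k ∧ μ q ≤ W q := by
  intro k
  induction k with
  | zero =>
    intro Q M hcard _
    refine ⟨id, ?_, ?_⟩
    · intro a ha b hb h; exact h
    · intro q hq
      rw [card_eq_zero.mp hcard] at hq
      exact absurd hq (notMem_empty q)
  | succ k ih =>
    intro Q M hcard hcond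
    -- find q* with W q* ≥ M + k + 1
    have hex : ∃ q ∈ Q, M + k + 1 ≤ W q := by
      by_contra hno
      push_neg at hno
      have : Q.filter (fun q => W q ≤ M + k) = Q := by
        apply filter_eq_self.mpr
        intro q hq
        have := hno q hq
        omega
      have h2 := hcond k (by omega)
      rw [this] at h2
      omega
    obtain ⟨q0, hq0, hWq0⟩ := hex
    obtain ⟨μ', hinj', hbd'⟩ := ih (Q.erase q0) M
      (by rw [card_erase_of_mem hq0, hcard]; rfl)
      (by
        intro t ht
        calc ((Q.erase q0).filter fun q => W q ≤ M + t).card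
            ≤ (Q.filter fun q => W q ≤ M + t).card :=
              card_le_card (filter_subset_filter _ (erase_subset _ _))
          _ ≤ t := hcond t (by omega))
    refine ⟨fun q => if q = q0 then M + k + 1 else μ' q, ?_, ?_⟩
    · intro a ha b hb hab
      by_cases ha0 : a = q0 <;> by_cases hb0 : b = q0
      · rw [ha0, hb0]
      · exfalso
        simp only [ha0, if_pos, if_neg hb0] at hab
        have := (hbd' b (mem_erase.mpr ⟨hb0, hb⟩)).2.1
        omega
      · exfalso
        simp only [hb0, if_pos, if_neg ha0] at hab
        have := (hbd' a (mem_erase.mpr ⟨ha0, ha⟩)).2.1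
        omega
      · simp only [if_neg ha0, if_neg hb0] at hab
        exact hinj' (mem_coe.mpr (mem_erase.mpr ⟨ha0, ha⟩)) (mem_coe.mpr (mem_erase.mpr ⟨hb0, hb⟩)) hab
    · intro q hq
      by_cases hq0' : q = q0
      · simp only [if_pos hq0']
        subst hq0'
        exact ⟨by omega, by omega, hWq0⟩
      · simp only [if_neg hq0']
        have := hbd' q (mem_erase.mpr ⟨hq0', hq⟩)
        exact ⟨this.1, by omega, this.2.2⟩

private def Af (c f j : ℕ) : ℕ := if j ≤ f then f - j else f + (2 * c - 1) - j
private def Bf (c f j : ℕ) : ℕ := if f + j ≤ 2 * c - 2 then f + j else f + j - (2 * c - 1)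

private lemma AB_basic {c f j : ℕ} (hc : 2 ≤ c) (hf : f ≤ 2 * c - 2) (hj1 : 1 ≤ j) (hjc : j ≤ c - 1) :
    Af c f j ≤ 2 * c - 2 ∧ Bf c f j ≤ 2 * c - 2 ∧ Af c f j ≠ Bf c f j ∧
      Af c f j ≠ f ∧ Bf c f j ≠ f := by
  unfold Af Bf
  split_ifs <;> omega

-- distinctness within a factor across j ≠ j'
private lemma AB_within {c f j j' : ℕ} (hc : 2 ≤ c) (hf : f ≤ 2 * c - 2)
    (hj1 : 1 ≤ j) (hjc : j ≤ c - 1) (hj1' : 1 ≤ j') (hjc' : j' ≤ c - 1) (hne : j ≠ j') :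
    Af c f j ≠ Af c f j' ∧ Af c f j ≠ Bf c f j' ∧ Bf c f j ≠ Af c f j' ∧ Bf c f j ≠ Bf c f j' := by
  unfold Af Bf
  split_ifs <;> omega

-- cross-factor injectivity of unordered pairs
private lemma AB_cross {c f j f' j' : ℕ} (hc : 2 ≤ c) (hf : f ≤ 2 * c - 2) (hf' : f' ≤ 2 * c - 2)
    (hj1 : 1 ≤ j) (hjc : j ≤ c - 1) (hj1' : 1 ≤ j') (hjc' : j' ≤ c - 1)
    (hne : f ≠ f' ∨ j ≠ j') :
    ¬((Af c f j = Af c f' j' ∧ Bf c f j = Bf c f' j') ∨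
      (Af c f j = Bf c f' j' ∧ Bf c f j = Af c f' j')) := by
  unfold Af Bf
  split_ifs <;> omega


private def Cf (c f j : ℕ) : ℕ := if Af c f j ≤ Bf c f j then Af c f j else Bf c f j
private def Df (c f j : ℕ) : ℕ := if Af c f j ≤ Bf c f j then Bf c f j else Af c f j

private lemma CD_basic {c f j : ℕ} (hc : 2 ≤ c) (hf : f ≤ 2 * c - 2) (hj1 : 1 ≤ j) (hjc : j ≤ c - 1) :
    Cf c f j < Df c f j ∧ Df c f j ≤ 2 * c - 2 ∧ Cf c f j ≠ f ∧ Df c f j ≠ f := by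
  have := AB_basic hc hf hj1 hjc
  unfold Cf Df
  split_ifs <;> omega

private lemma CD_within {c f j j' : ℕ} (hc : 2 ≤ c) (hf : f ≤ 2 * c - 2)
    (hj1 : 1 ≤ j) (hjc : j ≤ c - 1) (hj1' : 1 ≤ j') (hjc' : j' ≤ c - 1) (hne : j ≠ j') :
    Cf c f j ≠ Cf c f j' ∧ Cf c f j ≠ Df c f j' ∧ Df c f j ≠ Cf c f j' ∧ Df c f j ≠ Df c f j' := by
  have := AB_within hc hf hj1 hjc hj1' hjc' hne
  unfold Cf Df
  split_ifs <;> omega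

private lemma CD_cross {c f j f' j' : ℕ} (hc : 2 ≤ c) (hf : f ≤ 2 * c - 2) (hf' : f' ≤ 2 * c - 2)
    (hj1 : 1 ≤ j) (hjc : j ≤ c - 1) (hj1' : 1 ≤ j') (hjc' : j' ≤ c - 1)
    (hne : f ≠ f' ∨ j ≠ j') :
    ¬(Cf c f j = Cf c f' j' ∧ Df c f j = Df c f' j') := by
  have := AB_cross hc hf hf' hj1 hjc hj1' hjc' hne
  unfold Cf Df
  split_ifs <;> omega

private def ppF (l c f j : ℕ) : ℕ × ℕ :=
  if j = 0 then (2 * l + c + 1 + f, 2 * l + 3 * c)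
  else (2 * l + c + 1 + Cf c f j, 2 * l + c + 1 + Df c f j)

private lemma ppF0 {l c f : ℕ} :
    (ppF l c f 0).1 = 2 * l + c + 1 + f ∧ (ppF l c f 0).2 = 2 * l + 3 * c := by
  unfold ppF; simp

private lemma ppFj {l c f j : ℕ} (hj : j ≠ 0) :
    (ppF l c f j).1 = 2 * l + c + 1 + Cf c f j ∧ (ppF l c f j).2 = 2 * l + c + 1 + Df c f j := by
  unfold ppF; simp [hj]

private lemma notD_even {l d : ℕ} {F : Finset (Finset ℕ)} (hd : ¬ DCond l F d) (he : Even d) :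
    ∀ i, 1 ≤ i → i ≤ l + d / 2 → ({i, 2 * l + d + 1 - i} : Finset ℕ) ∈ F := by
  intro i h1 h2
  by_contra hx
  exact hd (Or.inl ⟨he, i, Finset.mem_Icc.mpr ⟨h1, h2⟩, hx⟩)

private lemma notD_odd {l d : ℕ} {F : Finset (Finset ℕ)} (hd : ¬ DCond l F d) (ho : Odd d) :
    ({1, 2 * l + d} : Finset ℕ) ∈ F ∧
      ∀ i, 3 ≤ i → i ≤ l + (d + 1) / 2 → ({i, 2 * l + d + 2 - i} : Finset ℕ) ∈ F := by
  constructor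
  · by_contra hx
    exact hd (Or.inr ⟨ho, Or.inl hx⟩)
  · intro i h1 h2
    by_contra hx
    exact hd (Or.inr ⟨ho, Or.inr ⟨i, Finset.mem_Icc.mpr ⟨h1, h2⟩, hx⟩⟩)

private lemma forced_pairs {n l c : ℕ} {F : Finset (Finset ℕ)} (hl : 1 ≤ l) (hc : 2 ≤ c)
    (hn : n = 2 * l + 3 * c) (hsh : IsShifted n F)
    (hD1 : ¬ DCond l F c) (hD2 : ¬ DCond l F (c + 1)) :
    (∀ b, 2 ≤ b → b ≤ 2 * l + c → ({1, b} : Finset ℕ) ∈ F) ∧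
    (∀ b, 3 ≤ b → b ≤ 2 * l + c - 1 → ({2, b} : Finset ℕ) ∈ F) ∧
    (∀ a b, 3 ≤ a → a ≤ l + 1 → a < b → a + b ≤ 2 * l + c + 2 → ({a, b} : Finset ℕ) ∈ F) := by
  rcases Nat.even_or_odd c with hce | hco
  · -- c even: use even d = c and odd d = c + 1
    have hE := notD_even hD1 hce
    have hO := (notD_odd hD2 (Even.add_one hce)).2
    obtain ⟨c2, hc2⟩ := hce
    refine ⟨?_, ?_, ?_⟩
    · intro b hb1 hb2
      have h1 : ({1, 2 * l + c + 1 - 1} : Finset ℕ) ∈ F := hE 1 le_rfl (by omega)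
      exact pair_down hsh (by omega) (by omega) h1 le_rfl (by omega) le_rfl (by omega)
    · intro b hb1 hb2
      have h1 : ({2, 2 * l + c + 1 - 2} : Finset ℕ) ∈ F := hE 2 (by omega) (by omega)
      exact pair_down hsh (by omega) (by omega) h1 (by omega) (by omega) le_rfl (by omega)
    · intro a b ha3 hal hab hsum
      have h1 : ({a, 2 * l + (c + 1) + 2 - a} : Finset ℕ) ∈ F := hO a ha3 (by omega)
      exact pair_down hsh (by omega) (by omega) h1 (by omega) hab le_rfl (by omega)
  · -- c odd: use even d = c + 1
    have hE := notD_even hD2 (Odd.add_one hco)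
    obtain ⟨c2, hc2⟩ := hco
    refine ⟨?_, ?_, ?_⟩
    · intro b hb1 hb2
      have h1 : ({1, 2 * l + (c + 1) + 1 - 1} : Finset ℕ) ∈ F := hE 1 le_rfl (by omega)
      exact pair_down hsh (by omega) (by omega) h1 le_rfl (by omega) le_rfl (by omega)
    · intro b hb1 hb2
      have h1 : ({2, 2 * l + (c + 1) + 1 - 2} : Finset ℕ) ∈ F := hE 2 (by omega) (by omega)
      exact pair_down hsh (by omega) (by omega) h1 (by omega) (by omega) le_rfl (by omega)
    · intro a b ha3 hal hab hsum
      have h1 : ({a, 2 * l + (c + 1) + 1 - a} : Finset ℕ) ∈ F := hE a (by omega) (by omega)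
      exact pair_down hsh (by omega) (by omega) h1 (by omega) hab le_rfl (by omega)

private lemma build_matching {n l c s : ℕ} {F : Finset (Finset ℕ)}
    (hl : 1 ≤ l) (hc : 2 ≤ c) (hn : n = 2 * l + 3 * c) (hcl : c + l = s)
    (hnu : matchingNumber F < s)
    (pr : ℕ → ℕ × ℕ)
    (hpr : ∀ j, j < c → 2 * l + c + 1 ≤ (pr j).1 ∧ (pr j).1 < (pr j).2 ∧ (pr j).2 ≤ n)
    (hprd : ∀ j, j < c → ∀ j', j' < c → j ≠ j' →
      (pr j).1 ≠ (pr j').1 ∧ (pr j).1 ≠ (pr j').2 ∧ (pr j).2 ≠ (pr j').1 ∧ (pr j).2 ≠ (pr j').2)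
    (h δ : ℕ) (ν : ℕ → ℕ)
    (hh1 : 1 ≤ h) (hh2 : h ≤ l + 1) (hcase : δ = 1 ∨ (δ = 0 ∧ h = 1))
    (hpF : ∀ a, 1 ≤ a → a ≤ l + 1 → a ≠ h →
      ({a, if a < h then 2 * l + c + 1 - a else 2 * l + c + 1 + δ - a} : Finset ℕ) ∈ F)
    (hνinj : Set.InjOn ν (↑(range c) : Set ℕ))
    (hν : ∀ j, j < c → 1 ≤ ν j ∧ ν j ≤ 2 * l + c ∧
      ({ν j, (pr j).1, (pr j).2} : Finset ℕ) ∈ F ∧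
      (∀ a, 1 ≤ a → a ≤ l + 1 → a ≠ h →
        ν j ≠ a ∧ ν j ≠ (if a < h then 2 * l + c + 1 - a else 2 * l + c + 1 + δ - a))) :
    False := by
  classical
  set ptn : ℕ → ℕ := fun a => if a < h then 2 * l + c + 1 - a else 2 * l + c + 1 + δ - a with hptn
  have hptn_bnd : ∀ a, 1 ≤ a → a ≤ l + 1 → a ≠ h →
      l + c ≤ ptn a ∧ ptn a ≤ 2 * l + c ∧ a < ptn a := by
    intro a h1 h2 h3
    simp only [hptn]
    split_ifs <;> omega
  have hptn_inj : ∀ a, 1 ≤ a → a ≤ l + 1 → a ≠ h → ∀ a', 1 ≤ a' → a' ≤ l + 1 → a' ≠ h →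
      a ≠ a' → ptn a ≠ ptn a' := by
    intro a h1 h2 h3 a' h1' h2' h3' hne
    simp only [hptn]
    split_ifs <;> omega
  set Mtri : Finset (Finset ℕ) :=
    (range c).image (fun j => ({ν j, (pr j).1, (pr j).2} : Finset ℕ)) with hMtri
  set Mp : Finset (Finset ℕ) :=
    ((Icc 1 (l + 1)).erase h).image (fun a => ({a, ptn a} : Finset ℕ)) with hMp
  -- facts about triples
  have htri_sorted : ∀ j, j < c → ν j < (pr j).1 ∧ (pr j).1 < (pr j).2 := by
    intro j hj
    have h1 := (hν j hj).2.1
    have h2 := hpr j hj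
    omega
  have htri_card : ∀ j, j < c → ({ν j, (pr j).1, (pr j).2} : Finset ℕ).card = 3 := by
    intro j hj
    obtain ⟨h1, h2⟩ := htri_sorted j hj
    rw [card_insert_of_notMem (by simp; omega), card_insert_of_notMem (by simp; omega),
      card_singleton]
  have hpair_card : ∀ a, 1 ≤ a → a ≤ l + 1 → a ≠ h → ({a, ptn a} : Finset ℕ).card = 2 := by
    intro a h1 h2 h3
    have := hptn_bnd a h1 h2 h3
    rw [card_insert_of_notMem (by simp; omega), card_singleton]
  -- cards
  have hcard_tri : Mtri.card = c := by
    rw [hMtri, card_image_of_injOn, card_range]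
    intro j hj j' hj' heq
    simp only [mem_coe, mem_range] at hj hj'
    by_contra hne
    obtain ⟨hs1, hs2⟩ := htri_sorted j hj
    obtain ⟨hs1', hs2'⟩ := htri_sorted j' hj'
    have := tri_eq hs1 hs2 hs1' hs2' heq
    exact (hprd j hj j' hj' hne).1 this.2.1
  have hcard_p : Mp.card = l := by
    rw [hMp, card_image_of_injOn, card_erase_of_mem (by rw [mem_Icc]; omega), Nat.card_Icc]
    · omega
    · intro a ha a' ha' heq
      simp only [mem_coe, mem_erase, mem_Icc] at ha ha'
      have hb := hptn_bnd a ha.2.1 ha.2.2 ha.1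
      have hb' := hptn_bnd a' ha'.2.1 ha'.2.2 ha'.1
      replace heq : ({a, ptn a} : Finset ℕ) = {a', ptn a'} := heq
      have : a ∈ ({a', ptn a'} : Finset ℕ) := by rw [← heq]; simp
      simp only [mem_insert, mem_singleton] at this
      rcases this with h' | h'
      · exact h'
      · omega
  have hdis : Disjoint Mtri Mp := by
    rw [disjoint_left]
    intro A hA hB
    rw [hMtri, mem_image] at hA
    rw [hMp, mem_image] at hB
    obtain ⟨j, hj, rfl⟩ := hA
    obtain ⟨a, ha, heq⟩ := hB
    simp only [mem_range] at hj
    simp only [mem_erase, mem_Icc] at ha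
    have h3 := htri_card j hj
    have h2 := hpair_card a ha.2.1 ha.2.2 ha.1
    replace heq : ({a, ptn a} : Finset ℕ) = {ν j, (pr j).1, (pr j).2} := heq
    rw [← heq] at h3
    omega
  -- the matching
  set M : Finset (Finset ℕ) := Mtri ∪ Mp with hM
  have hcardM : M.card = s := by
    rw [hM, card_union_of_disjoint hdis, hcard_tri, hcard_p]
    omega
  have hsub : M ⊆ F := by
    intro A hA
    rw [hM, mem_union] at hA
    rcases hA with hA | hA
    · rw [hMtri, mem_image] at hA
      obtain ⟨j, hj, rfl⟩ := hA
      simp only [mem_range] at hj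
      exact (hν j hj).2.2.1
    · rw [hMp, mem_image] at hA
      obtain ⟨a, ha, rfl⟩ := hA
      simp only [mem_erase, mem_Icc] at ha
      exact hpF a ha.2.1 ha.2.2 ha.1
  have hpw : (↑M : Set (Finset ℕ)).Pairwise fun A B => Disjoint A B := by
    intro A hA B hB hne
    simp only [hM, coe_union, Set.mem_union, mem_coe] at hA hB
    have hAB : ∀ (P Q : Finset ℕ), P = A → Q = B → Disjoint P Q → Disjoint A B := by
      rintro P Q rfl rfl hd; exact hd
    clear hAB
    rcases hA with hA | hA <;> rcases hB with hB | hB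
    · -- tri tri
      rw [hMtri, mem_image] at hA hB
      obtain ⟨j, hj, rfl⟩ := hA
      obtain ⟨j', hj', rfl⟩ := hB
      simp only [mem_range] at hj hj'
      have hjj : j ≠ j' := by rintro rfl; exact hne rfl
      have hd := hprd j hj j' hj' hjj
      have hb1 := hν j hj
      have hb1' := hν j' hj'
      have hp1 := hpr j hj
      have hp1' := hpr j' hj'
      have hνne : ν j ≠ ν j' := fun he => hjj (hνinj (by simp [hj]) (by simp [hj']) he)
      rw [disjoint_left]
      intro x hx hx'
      simp only [mem_insert, mem_singleton] at hx hx'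
      rcases hx with rfl | rfl | rfl <;> rcases hx' with h' | h' | h' <;> omega
    · -- tri pair
      rw [hMtri, mem_image] at hA
      rw [hMp, mem_image] at hB
      obtain ⟨j, hj, rfl⟩ := hA
      obtain ⟨a, ha, rfl⟩ := hB
      simp only [mem_range] at hj
      simp only [mem_erase, mem_Icc] at ha
      have hb1 := hν j hj
      have hp1 := hpr j hj
      have hbp := hptn_bnd a ha.2.1 ha.2.2 ha.1
      have hsep : ν j ≠ a ∧ ν j ≠ ptn a := hb1.2.2.2 a ha.2.1 ha.2.2 ha.1
      rw [disjoint_left]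
      intro x hx hx'
      simp only [mem_insert, mem_singleton] at hx hx'
      rcases hx with rfl | rfl | rfl <;> rcases hx' with h' | h' <;> omega
    · -- pair tri
      rw [hMp, mem_image] at hA
      rw [hMtri, mem_image] at hB
      obtain ⟨a, ha, rfl⟩ := hA
      obtain ⟨j, hj, rfl⟩ := hB
      simp only [mem_range] at hj
      simp only [mem_erase, mem_Icc] at ha
      have hb1 := hν j hj
      have hp1 := hpr j hj
      have hbp := hptn_bnd a ha.2.1 ha.2.2 ha.1
      have hsep : ν j ≠ a ∧ ν j ≠ ptn a := hb1.2.2.2 a ha.2.1 ha.2.2 ha.1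
      rw [disjoint_left]
      intro x hx hx'
      simp only [mem_insert, mem_singleton] at hx hx'
      rcases hx with rfl | rfl <;> rcases hx' with h' | h' | h' <;> omega
    · -- pair pair
      rw [hMp, mem_image] at hA hB
      obtain ⟨a, ha, rfl⟩ := hA
      obtain ⟨a', ha', rfl⟩ := hB
      simp only [mem_erase, mem_Icc] at ha ha'
      have haa : a ≠ a' := by rintro rfl; exact hne rfl
      have hbp := hptn_bnd a ha.2.1 ha.2.2 ha.1
      have hbp' := hptn_bnd a' ha'.2.1 ha'.2.2 ha'.1
      have hpi := hptn_inj a ha.2.1 ha.2.2 ha.1 a' ha'.2.1 ha'.2.2 ha'.1 haa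
      rw [disjoint_left]
      intro x hx hx'
      simp only [mem_insert, mem_singleton] at hx hx'
      rcases hx with rfl | rfl <;> rcases hx' with h' | h' <;> omega
  have := nu_ge hsub hpw
  omega

private def Xv (F : Finset (Finset ℕ)) (u v : ℕ) : ℕ :=
  ((Icc 1 (u - 1)).filter fun x => ({x, u, v} : Finset ℕ) ∈ F).sup id

private lemma Xv_le {F : Finset (Finset ℕ)} {u v : ℕ} : Xv F u v ≤ u - 1 :=
  Finset.sup_le fun b hb => (mem_Icc.mp (mem_filter.mp hb).1).2

private lemma Xv_mem {n : ℕ} {F : Finset (Finset ℕ)} (hsh : IsShifted n F) {u v : ℕ}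
    (huv : u < v) (hvn : v ≤ n) {x : ℕ} (hx1 : 1 ≤ x) (hx : x ≤ Xv F u v) :
    ({x, u, v} : Finset ℕ) ∈ F := by
  have hne : ((Icc 1 (u - 1)).filter fun y => ({y, u, v} : Finset ℕ) ∈ F).Nonempty := by
    by_contra hcon
    rw [not_nonempty_iff_eq_empty] at hcon
    have : Xv F u v = 0 := by unfold Xv; rw [hcon]; rfl
    omega
  obtain ⟨x0, hx0, hx0e⟩ := Finset.exists_mem_eq_sup _ hne id
  rw [mem_filter, mem_Icc] at hx0
  have hXv : Xv F u v = x0 := hx0e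
  exact tri_down hsh (by omega) huv hvn hx0.2 hx1 (by omega)

private lemma Xv_not_mem {F : Finset (Finset ℕ)} {u v x : ℕ} (hx : Xv F u v < x)
    (hxu : x ≤ u - 1) (hx1 : 1 ≤ x) : ({x, u, v} : Finset ℕ) ∉ F := by
  intro hmem
  have : x ≤ Xv F u v :=
    Finset.le_sup (f := id) (mem_filter.mpr ⟨mem_Icc.mpr ⟨hx1, hxu⟩, hmem⟩)
  omega

private lemma key_partition {n l c s : ℕ} {F : Finset (Finset ℕ)}
    (hl : 1 ≤ l) (hc : 2 ≤ c) (hn : n = 2 * l + 3 * c) (hcl : c + l = s)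
    (hnu : matchingNumber F < s) (hsh : IsShifted n F)
    (hA : ∀ b, 2 ≤ b → b ≤ 2 * l + c → ({1, b} : Finset ℕ) ∈ F)
    (hB : ∀ b, 3 ≤ b → b ≤ 2 * l + c - 1 → ({2, b} : Finset ℕ) ∈ F)
    (hC : ∀ a b, 3 ≤ a → a ≤ l + 1 → a < b → a + b ≤ 2 * l + c + 2 → ({a, b} : Finset ℕ) ∈ F)
    (pr : ℕ → ℕ × ℕ)
    (hpr : ∀ j, j < c → 2 * l + c + 1 ≤ (pr j).1 ∧ (pr j).1 < (pr j).2 ∧ (pr j).2 ≤ n)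
    (hprd : ∀ j, j < c → ∀ j', j' < c → j ≠ j' →
      (pr j).1 ≠ (pr j').1 ∧ (pr j).1 ≠ (pr j').2 ∧ (pr j).2 ≠ (pr j').1 ∧ (pr j).2 ≠ (pr j').2) :
    2 * l + c ≤ ∑ j ∈ range c, ((pr j).1 - 1 - Xv F (pr j).1 (pr j).2) := by
  classical
  by_contra hcon
  push_neg at hcon
  set W : ℕ → ℕ := fun j => min (Xv F (pr j).1 (pr j).2) (2 * l + c) with hWdef
  set mv : ℕ → ℕ := fun j => (pr j).1 - 1 - Xv F (pr j).1 (pr j).2 with hmvdef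
  replace hcon : ∑ j ∈ range c, mv j < 2 * l + c := hcon
  have hmlow : ∀ j, j < c → 2 * l + c - W j ≤ mv j ∧ W j ≤ 2 * l + c := by
    intro j hj
    have h1 := (hpr j hj).1
    have h2 : Xv F (pr j).1 (pr j).2 ≤ (pr j).1 - 1 := Xv_le
    simp only [hWdef, hmvdef]
    omega
  have hWX : ∀ j, j < c → W j ≤ Xv F (pr j).1 (pr j).2 := by
    intro j hj
    simp only [hWdef]
    omega
  have hterm : ∀ j, j < c → mv j ≤ ∑ i ∈ range c, mv i := by
    intro j hj
    exact Finset.single_le_sum (f := mv) (fun i _ => Nat.zero_le _) (mem_range.mpr hj)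
  -- the triple-in-F helper
  have htriF : ∀ j, j < c → ∀ x, 1 ≤ x → x ≤ W j → ({x, (pr j).1, (pr j).2} : Finset ℕ) ∈ F := by
    intro j hj x hx1 hx2
    have hp := hpr j hj
    exact Xv_mem hsh hp.2.1 hp.2.2 hx1 (le_trans hx2 (hWX j hj))
  -- step 2
  have step2 : ∀ k, 2 ≤ k → k ≤ c →
      ((range c).filter fun j => W j ≤ l + k - 1).card ≤ k - 1 := by
    intro k hk2 hkc
    by_contra hbig
    push_neg at hbig
    have hlow : ∀ j ∈ (range c).filter (fun j => W j ≤ l + k - 1), l + c + 1 - k ≤ mv j := by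
      intro j hjf
      rw [mem_filter, mem_range] at hjf
      have := hmlow j hjf.1
      omega
    have hs1 := Finset.card_nsmul_le_sum _ mv (l + c + 1 - k) hlow
    rw [smul_eq_mul] at hs1
    replace hs1 : ((range c).filter fun j => W j ≤ l + k - 1).card * (l + c + 1 - k) ≤
        ∑ j ∈ (range c).filter (fun j => W j ≤ l + k - 1), mv j := hs1
    have hs2 : ∑ j ∈ (range c).filter (fun j => W j ≤ l + k - 1), mv j ≤ ∑ j ∈ range c, mv j :=
      Finset.sum_le_sum_of_subset (filter_subset _ _)
    have harith : 2 * l + c ≤ k * (l + c + 1 - k) := by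
      obtain ⟨e, he⟩ : ∃ e, c = k + e := ⟨c - k, by omega⟩
      have h1 : 2 * l ≤ k * l := Nat.mul_le_mul_right l hk2
      have h2 : 1 * e ≤ k * e := Nat.mul_le_mul_right e (by omega)
      have hq : l + c + 1 - k = l + e + 1 := by omega
      rw [hq]
      have hkk : k * (l + e + 1) = k * l + k * e + k := by ring
      omega
    have hcardk : k ≤ ((range c).filter fun j => W j ≤ l + k - 1).card := by omega
    have := Nat.mul_le_mul_right (l + c + 1 - k) hcardk
    omega
  -- argmin
  obtain ⟨j0, hj0mem, hj0min⟩ := Finset.exists_min_image (range c) W ⟨0, mem_range.mpr (by omega)⟩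
  have hj0 : j0 < c := mem_range.mp hj0mem
  by_cases hz : W j0 = 0
  · have h1 := hmlow j0 hj0
    have h2 := hterm j0 hj0
    omega
  by_cases ho : W j0 = 1
  · by_cases hex : ∃ j', j' < c ∧ j' ≠ j0 ∧ W j' ≤ 2 * l + c - 1
    · obtain ⟨j', hj'c, hj'ne, hj'W⟩ := hex
      have hsum2 : mv j0 + mv j' ≤ ∑ j ∈ range c, mv j := by
        have hsubp : ({j0, j'} : Finset ℕ) ⊆ range c := by
          intro t ht
          simp only [mem_insert, mem_singleton] at ht
          rcases ht with rfl | rfl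
          · exact mem_range.mpr hj0
          · exact mem_range.mpr hj'c
        calc mv j0 + mv j' = ∑ j ∈ ({j0, j'} : Finset ℕ), mv j :=
              (Finset.sum_pair (Ne.symm hj'ne)).symm
          _ ≤ ∑ j ∈ range c, mv j := Finset.sum_le_sum_of_subset hsubp
      have h1 := hmlow j0 hj0
      have h2 := hmlow j' hj'c
      omega
    · -- construction 1 : h = 1, δ = 0
      push_neg at hex
      have hWall : ∀ j', j' < c → j' ≠ j0 → W j' = 2 * l + c := by
        intro j' h1 h2
        have h3 := hex j' h1 h2
        have h4 := (hmlow j' h1).2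
        omega
      set i1 : ℕ := if j0 = 0 then 1 else 0 with hi1
      have hi1c : i1 < c := by rw [hi1]; split_ifs <;> omega
      have hi1ne : i1 ≠ j0 := by rw [hi1]; split_ifs <;> omega
      set ν : ℕ → ℕ := fun j => if j = j0 then 1 else if j = i1 then 2 * l + c else
        l + 2 + j - (if j0 < j then 1 else 0) - (if i1 < j then 1 else 0) with hνdef
      have hνval : ∀ j, j < c → j ≠ j0 → j ≠ i1 →
          l + 2 ≤ ν j ∧ ν j ≤ l + c - 1 := by
        intro j hj h1 h2
        simp only [hνdef]
        rw [if_neg h1, if_neg h2]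
        have : j0 ≠ i1 := Ne.symm hi1ne
        split_ifs <;> omega
      refine build_matching hl hc hn hcl hnu pr hpr hprd 1 0 ν le_rfl (by omega)
        (Or.inr ⟨rfl, rfl⟩) ?_ ?_ ?_
      · -- pairs in F
        intro a ha1 ha2 hane
        rw [if_neg (by omega)]
        have hb : 2 * l + c + 1 + 0 - a = 2 * l + c + 1 - a := by omega
        rw [hb]
        by_cases ha2' : a = 2
        · subst ha2'
          have : 2 * l + c + 1 - 2 = 2 * l + c - 1 := by omega
          rw [this]
          exact hB _ (by omega) (by omega)
        · exact hC a _ (by omega) ha2 (by omega) (by omega)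
      · -- InjOn ν
        intro a ha b hb heq
        simp only [mem_coe, mem_range] at ha hb
        by_contra hne
        have hji : j0 ≠ i1 := Ne.symm hi1ne
        by_cases ha0 : a = j0 <;> by_cases hb0 : b = j0 <;>
          by_cases ha1' : a = i1 <;> by_cases hb1' : b = i1
        all_goals (
          first
          | (exact hne (by omega))
          | (simp only [hνdef] at heq
             split_ifs at heq <;> omega))
      · -- per-triple conditions
        have hνcase : ∀ j, j < c → (j = j0 ∧ ν j = 1) ∨ (j ≠ j0 ∧ j = i1 ∧ ν j = 2 * l + c) ∨
            (j ≠ j0 ∧ j ≠ i1 ∧ l + 2 ≤ ν j ∧ ν j ≤ l + c - 1) := by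
          intro j hj
          by_cases h1 : j = j0
          · left
            exact ⟨h1, by simp [hνdef, h1]⟩
          · by_cases h2 : j = i1
            · right; left
              exact ⟨h1, h2, by simp [hνdef, h2, hi1ne]⟩
            · right; right
              exact ⟨h1, h2, hνval j hj h1 h2⟩
        intro j hj
        have htri : ({ν j, (pr j).1, (pr j).2} : Finset ℕ) ∈ F := by
          rcases hνcase j hj with ⟨h1, h2⟩ | ⟨h1, h2, h3⟩ | ⟨h1, h2, h3, h4⟩
          · rw [h2]
            have : W j = W j0 := by rw [h1]
            exact htriF j hj 1 le_rfl (by omega)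
          · rw [h3]
            have hWj : W j = 2 * l + c := hWall j hj h1
            exact htriF j hj _ (by omega) (by omega)
          · have hWj : W j = 2 * l + c := hWall j hj h1
            exact htriF j hj (ν j) (by omega) (by omega)
        have hνb : 1 ≤ ν j ∧ ν j ≤ 2 * l + c := by
          rcases hνcase j hj with ⟨h1, h2⟩ | ⟨h1, h2, h3⟩ | ⟨h1, h2, h3, h4⟩ <;> omega
        refine ⟨hνb.1, hνb.2, htri, ?_⟩
        intro a ha1 ha2 hane
        rw [if_neg (by omega)]
        rcases hνcase j hj with ⟨h1, h2⟩ | ⟨h1, h2, h3⟩ | ⟨h1, h2, h3, h4⟩ <;>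
          exact ⟨by omega, by omega⟩
  · -- W j0 ≥ 2 : Hall case, h = min (W j0) (l+1), δ = 1
    have hW2 : 2 ≤ W j0 := by omega
    have hcond : ∀ t, t ≤ c - 1 →
        (((range c).erase j0).filter fun q => W q ≤ l + 1 + t).card ≤ t := by
      intro t ht
      by_cases htc : t = c - 1
      · calc (((range c).erase j0).filter fun q => W q ≤ l + 1 + t).card
            ≤ ((range c).erase j0).card := card_filter_le _ _
          _ = c - 1 := by rw [card_erase_of_mem hj0mem, card_range]
          _ = t := htc.symm
      · by_contra hbig
        push_neg at hbig
        have hne : (((range c).erase j0).filter fun q => W q ≤ l + 1 + t).Nonempty :=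
          card_pos.mp (by omega)
        obtain ⟨q, hq⟩ := hne
        rw [mem_filter, mem_erase] at hq
        have hWj0 : W j0 ≤ l + 1 + t := le_trans (hj0min q hq.1.2) hq.2
        have hsubf : ((range c).erase j0).filter (fun q => W q ≤ l + 1 + t) ⊆
            ((range c).filter fun j => W j ≤ l + (t + 2) - 1).erase j0 := by
          intro z hz
          rw [mem_filter, mem_erase] at hz
          rw [mem_erase, mem_filter]
          exact ⟨hz.1.1, hz.1.2, by omega⟩
        have hj0in : j0 ∈ (range c).filter fun j => W j ≤ l + (t + 2) - 1 := by
          rw [mem_filter]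
          exact ⟨hj0mem, by omega⟩
        have hcards : (((range c).erase j0).filter fun q => W q ≤ l + 1 + t).card ≤
            ((range c).filter fun j => W j ≤ l + (t + 2) - 1).card - 1 := by
          calc _ ≤ (((range c).filter fun j => W j ≤ l + (t + 2) - 1).erase j0).card :=
                card_le_card hsubf
            _ = _ := card_erase_of_mem hj0in
        have := step2 (t + 2) (by omega) (by omega)
        omega
    obtain ⟨μ, hμinj, hμbd⟩ := hall_assign W (c - 1) ((range c).erase j0) (l + 1)
      (by rw [card_erase_of_mem hj0mem, card_range]) hcond
    have hμrange : ∀ q, q < c → q ≠ j0 → l + 2 ≤ μ q ∧ μ q ≤ l + c ∧ μ q ≤ W q := by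
      intro q h1 h2
      have := hμbd q (mem_erase.mpr ⟨h2, mem_range.mpr h1⟩)
      have hcc : l + 1 + (c - 1) = l + c := by omega
      omega
    set h : ℕ := min (W j0) (l + 1) with hhdef
    have hh1 : 2 ≤ h := by omega
    have hh2 : h ≤ l + 1 := by omega
    set ν : ℕ → ℕ := fun j => if j = j0 then h else μ j with hνdef
    refine build_matching hl hc hn hcl hnu pr hpr hprd h 1 ν (by omega) hh2
      (Or.inl rfl) ?_ ?_ ?_
    · -- pairs in F
      intro a ha1 ha2 hane
      by_cases hah : a < h
      · rw [if_pos hah]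
        by_cases ha1' : a = 1
        · subst ha1'
          have : 2 * l + c + 1 - 1 = 2 * l + c := by omega
          rw [this]
          exact hA _ (by omega) le_rfl
        · by_cases ha2' : a = 2
          · subst ha2'
            have : 2 * l + c + 1 - 2 = 2 * l + c - 1 := by omega
            rw [this]
            exact hB _ (by omega) le_rfl
          · exact hC a _ (by omega) (by omega) (by omega) (by omega)
      · rw [if_neg hah]
        exact hC a _ (by omega) ha2 (by omega) (by omega)
    · -- InjOn
      intro a ha b hb heq
      simp only [mem_coe, mem_range] at ha hb
      by_cases ha0 : a = j0 <;> by_cases hb0 : b = j0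
      · rw [ha0, hb0]
      · exfalso
        rw [hνdef] at heq
        simp only [ha0, if_pos, if_neg hb0] at heq
        have := hμrange b hb hb0
        omega
      · exfalso
        rw [hνdef] at heq
        simp only [hb0, if_pos, if_neg ha0] at heq
        have := hμrange a ha ha0
        omega
      · rw [hνdef] at heq
        simp only [if_neg ha0, if_neg hb0] at heq
        exact hμinj (mem_coe.mpr (mem_erase.mpr ⟨ha0, mem_range.mpr ha⟩))
          (mem_coe.mpr (mem_erase.mpr ⟨hb0, mem_range.mpr hb⟩)) heq
    · -- triple conditions
      intro j hj
      have hνj : (ν j = h ∧ j = j0) ∨ (l + 2 ≤ ν j ∧ ν j ≤ l + c ∧ ν j ≤ W j ∧ j ≠ j0) := by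
        by_cases h1 : j = j0
        · left; exact ⟨by simp [hνdef, h1], h1⟩
        · right
          have := hμrange j hj h1
          have hνe : ν j = μ j := by simp [hνdef, h1]
          omega
      have htri : ({ν j, (pr j).1, (pr j).2} : Finset ℕ) ∈ F := by
        rcases hνj with ⟨he, rfl⟩ | ⟨h1, h2, h3, h4⟩
        · rw [he]
          exact htriF j hj h (by omega) (by omega)
        · exact htriF j hj (ν j) (by omega) h3
      refine ⟨?_, ?_, htri, ?_⟩
      · rcases hνj with ⟨he, _⟩ | ⟨h1, _⟩ <;> omega
      · rcases hνj with ⟨he, _⟩ | ⟨h1, h2, _⟩ <;> omega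
      · intro a ha1 ha2 hane
        rcases hνj with ⟨he, _⟩ | ⟨h1, h2, _⟩ <;> refine ⟨by omega, ?_⟩ <;> split_ifs <;> omega


theorem stmt_16 (n s l c : ℕ) (hs0 : 0 < s) (hl0 : 0 < l) (hc0 : 0 < c)
    (hcl : c + l = s) (hn : n = 2 * l + 3 * c)
    (F : Finset (Finset ℕ)) (hF : ∀ A ∈ F, A ⊆ ground n) (hsh : IsShifted n F)
    (hnu : matchingNumber F < s) (hd : c + 2 ≤ dF l F) :
    (2 * l + c) * (2 * c - 1) ≤ yF n F 3 := by
  classical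
  have hl : 1 ≤ l := hl0
  -- no DCond below c + 2
  have hndc : ∀ d, d < c + 2 → ¬ DCond l F d := by
    intro d hdlt hDC
    have : dF l F ≤ d := Nat.sInf_le hDC
    omega
  -- the case c = 1 is contradictory
  rcases eq_or_lt_of_le (show 1 ≤ c from hc0) with hc1 | hc2
  · exfalso
    have hE := notD_even (hndc 2 (by omega)) ⟨1, rfl⟩
    set M : Finset (Finset ℕ) := (Icc 1 (l + 1)).image (fun i => ({i, 2 * l + 3 - i} : Finset ℕ))
      with hMdef
    have hcardM : M.card = l + 1 := by
      rw [hMdef, card_image_of_injOn, Nat.card_Icc]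
      · omega
      · intro a ha a' ha' heq
        simp only [mem_coe, mem_Icc] at ha ha'
        replace heq : ({a, 2 * l + 3 - a} : Finset ℕ) = {a', 2 * l + 3 - a'} := heq
        have : a ∈ ({a', 2 * l + 3 - a'} : Finset ℕ) := by rw [← heq]; simp
        simp only [mem_insert, mem_singleton] at this
        omega
    have hsub : M ⊆ F := by
      intro A hA
      rw [hMdef, mem_image] at hA
      obtain ⟨i, hi, rfl⟩ := hA
      rw [mem_Icc] at hi
      have := hE i (by omega) (by omega)
      have he : 2 * l + 2 + 1 - i = 2 * l + 3 - i := by omega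
      rwa [he] at this
    have hpw : (↑M : Set (Finset ℕ)).Pairwise fun A B => Disjoint A B := by
      intro A hA B hB hne
      rw [hMdef, mem_coe, mem_image] at hA hB
      obtain ⟨i, hi, rfl⟩ := hA
      obtain ⟨i', hi', rfl⟩ := hB
      rw [mem_Icc] at hi hi'
      have hii : i ≠ i' := by rintro rfl; exact hne rfl
      rw [disjoint_left]
      intro x hx hx'
      simp only [mem_insert, mem_singleton] at hx hx'
      omega
    have := nu_ge hsub hpw
    omega
  -- main case : c ≥ 2
  have hD1 := hndc c (by omega)
  have hD2 := hndc (c + 1) (by omega)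
  obtain ⟨hA, hB, hC⟩ := forced_pairs hl hc2 hn hsh hD1 hD2
  have hpp1 : ∀ f, f ≤ 2 * c - 2 → ∀ j, j < c →
      2 * l + c + 1 ≤ (ppF l c f j).1 ∧ (ppF l c f j).1 < (ppF l c f j).2 ∧ (ppF l c f j).2 ≤ n := by
    intro f hf j hj
    by_cases hj0 : j = 0
    · subst hj0
      have h0 := @ppF0 l c f
      omega
    · have h0 := @ppFj l c f j hj0
      have hab := CD_basic hc2 hf (show 1 ≤ j by omega) (show j ≤ c - 1 by omega)
      omega
  have hppd : ∀ f, f ≤ 2 * c - 2 → ∀ j, j < c → ∀ j', j' < c → j ≠ j' →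
      (ppF l c f j).1 ≠ (ppF l c f j').1 ∧ (ppF l c f j).1 ≠ (ppF l c f j').2 ∧
      (ppF l c f j).2 ≠ (ppF l c f j').1 ∧ (ppF l c f j).2 ≠ (ppF l c f j').2 := by
    intro f hf j hj j' hj' hne
    by_cases hj0 : j = 0 <;> by_cases hj0' : j' = 0
    · exact absurd (hj0.trans hj0'.symm) hne
    · subst hj0
      have h0 := @ppF0 l c f
      have h1 := @ppFj l c f j' hj0'
      have hab := CD_basic hc2 hf (show 1 ≤ j' by omega) (by omega)
      omega
    · subst hj0'
      have h0 := @ppF0 l c f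
      have h1 := @ppFj l c f j hj0
      have hab := CD_basic hc2 hf (show 1 ≤ j by omega) (by omega)
      omega
    · have h1 := @ppFj l c f j hj0
      have h1' := @ppFj l c f j' hj0'
      have hab := CD_basic hc2 hf (show 1 ≤ j by omega) (by omega)
      have hab' := CD_basic hc2 hf (show 1 ≤ j' by omega) (by omega)
      have hw := CD_within hc2 hf (show 1 ≤ j by omega) (by omega)
        (show 1 ≤ j' by omega) (by omega) hne
      omega
  have hppinj : ∀ f, f ≤ 2 * c - 2 → ∀ f', f' ≤ 2 * c - 2 → ∀ j, j < c → ∀ j', j' < c →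
      (ppF l c f j).1 = (ppF l c f' j').1 → (ppF l c f j).2 = (ppF l c f' j').2 → f = f' ∧ j = j' := by
    intro f hf f' hf' j hj j' hj' he1 he2
    by_cases hj0 : j = 0 <;> by_cases hj0' : j' = 0
    · subst hj0; subst hj0'
      have h0 := @ppF0 l c f
      have h0' := @ppF0 l c f'
      omega
    · exfalso
      subst hj0
      have h0 := @ppF0 l c f
      have h1' := @ppFj l c f' j' hj0'
      have hab' := CD_basic hc2 hf' (show 1 ≤ j' by omega) (by omega)
      omega
    · exfalso
      subst hj0'
      have h0 := @ppF0 l c f'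
      have h1 := @ppFj l c f j hj0
      have hab := CD_basic hc2 hf (show 1 ≤ j by omega) (by omega)
      omega
    · have h1 := @ppFj l c f j hj0
      have h1' := @ppFj l c f' j' hj0'
      have hab := CD_basic hc2 hf (show 1 ≤ j by omega) (by omega)
      have hab' := CD_basic hc2 hf' (show 1 ≤ j' by omega) (by omega)
      by_contra hcc
      have hne : f ≠ f' ∨ j ≠ j' := by
        by_cases hff : f = f'
        · exact Or.inr (fun hjj => hcc ⟨hff, hjj⟩)
        · exact Or.inl hff
      have hcr := CD_cross hc2 hf hf' (show 1 ≤ j by omega) (by omega)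
        (show 1 ≤ j' by omega) (by omega) hne
      omega
  have hfac : ∀ f, f ≤ 2 * c - 2 →
      2 * l + c ≤ ∑ j ∈ range c, ((ppF l c f j).1 - 1 - Xv F (ppF l c f j).1 (ppF l c f j).2) :=
    fun f hf => key_partition hl hc2 hn hcl hnu hsh hA hB hC (ppF l c f) (hpp1 f hf) (hppd f hf)
  -- the missing triples
  set Msing : ℕ × ℕ → Finset (Finset ℕ) := fun q =>
    (Icc (Xv F (ppF l c q.1 q.2).1 (ppF l c q.1 q.2).2 + 1) ((ppF l c q.1 q.2).1 - 1)).image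
      (fun x => ({x, (ppF l c q.1 q.2).1, (ppF l c q.1 q.2).2} : Finset ℕ)) with hMsing
  set Idx : Finset (ℕ × ℕ) := (range (2 * c - 1)) ×ˢ (range c) with hIdx
  have hIdxmem : ∀ q ∈ Idx, q.1 ≤ 2 * c - 2 ∧ q.2 < c := by
    intro q hq
    rw [hIdx, mem_product, mem_range, mem_range] at hq
    omega
  set Missing : Finset (Finset ℕ) := Idx.biUnion Msing with hMissing
  have hcardsing : ∀ q ∈ Idx, (Msing q).card =
      (ppF l c q.1 q.2).1 - 1 - Xv F (ppF l c q.1 q.2).1 (ppF l c q.1 q.2).2 := by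
    intro q hq
    obtain ⟨hq1, hq2⟩ := hIdxmem q hq
    have hb := hpp1 q.1 hq1 q.2 hq2
    have hXle : Xv F (ppF l c q.1 q.2).1 (ppF l c q.1 q.2).2 ≤ (ppF l c q.1 q.2).1 - 1 := Xv_le
    rw [hMsing, card_image_of_injOn, Nat.card_Icc]
    · omega
    · intro x hx x' hx' heq
      simp only [mem_coe, mem_Icc] at hx hx'
      replace heq : ({x, (ppF l c q.1 q.2).1, (ppF l c q.1 q.2).2} : Finset ℕ) =
        {x', (ppF l c q.1 q.2).1, (ppF l c q.1 q.2).2} := heq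
      exact (tri_eq (by omega) (by omega) (by omega) (by omega) heq).1
  have hcardM : Missing.card = ∑ q ∈ Idx, (Msing q).card := by
    rw [hMissing]
    apply card_biUnion
    intro q hq q' hq' hne
    obtain ⟨hq1, hq2⟩ := hIdxmem q hq
    obtain ⟨hq1', hq2'⟩ := hIdxmem q' hq'
    have hb := hpp1 q.1 hq1 q.2 hq2
    have hb' := hpp1 q'.1 hq1' q'.2 hq2'
    rw [Function.onFun, disjoint_left]
    intro A hA hA'
    rw [hMsing, mem_image] at hA hA'
    obtain ⟨x, hx, rfl⟩ := hA
    obtain ⟨x', hx', heq⟩ := hA'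
    rw [mem_Icc] at hx hx'
    replace heq : ({x', (ppF l c q'.1 q'.2).1, (ppF l c q'.1 q'.2).2} : Finset ℕ) =
      {x, (ppF l c q.1 q.2).1, (ppF l c q.1 q.2).2} := heq
    have hXle : Xv F (ppF l c q.1 q.2).1 (ppF l c q.1 q.2).2 ≤ (ppF l c q.1 q.2).1 - 1 := Xv_le
    have hXle' : Xv F (ppF l c q'.1 q'.2).1 (ppF l c q'.1 q'.2).2 ≤ (ppF l c q'.1 q'.2).1 - 1 := Xv_le
    have hteq := tri_eq (show x' < (ppF l c q'.1 q'.2).1 by omega) (by omega)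
      (show x < (ppF l c q.1 q.2).1 by omega) (by omega) heq
    have := hppinj q'.1 hq1' q.1 hq1 q'.2 hq2' q.2 hq2 hteq.2.1 hteq.2.2
    apply hne
    have : q = q' := by
      apply Prod.ext <;> omega
    exact this
  have hsumlow : (2 * c - 1) * (2 * l + c) ≤ ∑ q ∈ Idx, (Msing q).card := by
    have he : ∑ q ∈ Idx, (Msing q).card =
        ∑ f ∈ range (2 * c - 1), ∑ j ∈ range c, (Msing (f, j)).card := by
      rw [hIdx, Finset.sum_product]
    rw [he]
    have hstep : ∀ f ∈ range (2 * c - 1), 2 * l + c ≤ ∑ j ∈ range c, (Msing (f, j)).card := by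
      intro f hf
      rw [mem_range] at hf
      have hf2 : f ≤ 2 * c - 2 := by omega
      have hrw : ∑ j ∈ range c, (Msing (f, j)).card =
          ∑ j ∈ range c, ((ppF l c f j).1 - 1 - Xv F (ppF l c f j).1 (ppF l c f j).2) := by
        apply Finset.sum_congr rfl
        intro j hj
        exact hcardsing (f, j) (by rw [hIdx, mem_product]; exact ⟨mem_range.mpr hf, hj⟩)
      rw [hrw]
      exact hfac f hf2
    calc (2 * c - 1) * (2 * l + c) = ∑ _f ∈ range (2 * c - 1), (2 * l + c) := by
          rw [Finset.sum_const, card_range, smul_eq_mul]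
      _ ≤ _ := Finset.sum_le_sum hstep
  -- Missing consists of missing 3-subsets of the ground set
  have hMsub : Missing ⊆ ((ground n).powersetCard 3) \ (layer n F 3) := by
    intro A hA
    rw [hMissing, mem_biUnion] at hA
    obtain ⟨q, hq, hA⟩ := hA
    obtain ⟨hq1, hq2⟩ := hIdxmem q hq
    have hb := hpp1 q.1 hq1 q.2 hq2
    rw [hMsing, mem_image] at hA
    obtain ⟨x, hx, rfl⟩ := hA
    rw [mem_Icc] at hx
    have hXle : Xv F (ppF l c q.1 q.2).1 (ppF l c q.1 q.2).2 ≤ (ppF l c q.1 q.2).1 - 1 := Xv_le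
    rw [mem_sdiff]
    constructor
    · rw [mem_powersetCard]
      constructor
      · intro t ht
        simp only [mem_insert, mem_singleton] at ht
        rw [ground, mem_Icc]
        rcases ht with rfl | rfl | rfl <;> omega
      · rw [card_insert_of_notMem (by simp; omega), card_insert_of_notMem (by simp; omega),
          card_singleton]
    · rw [layer, mem_inter]
      intro hcontra
      exact Xv_not_mem (by omega) (by omega) (by omega) hcontra.1
  -- conclude
  have hlayer_sub : layer n F 3 ⊆ (ground n).powersetCard 3 := by
    rw [layer]; exact inter_subset_right
  have hcard_sdiff : (((ground n).powersetCard 3) \ (layer n F 3)).card =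
      n.choose 3 - (layer n F 3).card := by
    rw [card_sdiff_of_subset hlayer_sub, card_powersetCard]
    have : (ground n).card = n := by rw [ground, Nat.card_Icc]; omega
    rw [this]
  have hfinal : Missing.card ≤ yF n F 3 := by
    rw [yF, ← hcard_sdiff]
    exact card_le_card hMsub
  rw [hcardM] at hfinal
  calc (2 * l + c) * (2 * c - 1) = (2 * c - 1) * (2 * l + c) := Nat.mul_comm _ _
    _ ≤ ∑ q ∈ Idx, (Msing q).card := hsumlow
    _ ≤ yF n F 3 := hfinal
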